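/- arXiv:0911.2518 — 5 statements merged into one kernel-verified Lean document; each statement's English description precedes it below -/
import Mathlib

section
/- Let n : ℕ, m : ℝ, let R : Matrix (Fin 1) (Fin n) ℝ be a row vector, and let A : Matrix (Fin n) (Fin n) ℝ be symmetric. Consider the symmetric (n+2)×(n+2) real matrix G whose block form is [[1, 1, 0], [1, m, R], [0, Rᵀ, A]] (first row is (1, 1, 0, …, 0), second row is (1, m, R), and remaining rows are (0, Rᵀ, A)). Then sig(G) = 1 + sig(G'), where G' is the symmetric (n+1)×(n+1) matrix with block form [[m − 1, R], [Rᵀ, A]]. -/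
open Matrix

open Classical in
/-- The signature of a real symmetric (Hermitian) matrix: the number of positive
eigenvalues minus the number of negative eigenvalues, counted with multiplicity. -/
noncomputable def matSig {ι : Type} [Fintype ι] [DecidableEq ι] (M : Matrix ι ι ℝ) : ℤ :=
  if h : M.IsHermitian then
    ((Finset.univ.filter fun i => 0 < h.eigenvalues i).card : ℤ)
      - ((Finset.univ.filter fun i => h.eigenvalues i < 0).card : ℤ)
  else 0

namespace SigAux

open Finset

variable {ι : Type} [Fintype ι] [DecidableEq ι]
variable {M : Matrix ι ι ℝ}

/-- The quadratic form of a matrix. -/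
noncomputable def qf (M : Matrix ι ι ℝ) (x : ι → ℝ) : ℝ := x ⬝ᵥ M.mulVec x

@[simp] lemma qf_zero (M : Matrix ι ι ℝ) : qf M 0 = 0 := by simp [qf]

def PosOn (M : Matrix ι ι ℝ) (W : Submodule ℝ (ι → ℝ)) : Prop :=
  ∀ x ∈ W, x ≠ 0 → 0 < qf M x

def NegOn (M : Matrix ι ι ℝ) (W : Submodule ℝ (ι → ℝ)) : Prop :=
  ∀ x ∈ W, x ≠ 0 → qf M x < 0

noncomputable def pcard (h : M.IsHermitian) : ℕ :=
  (univ.filter fun i => 0 < h.eigenvalues i).card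

noncomputable def ncard (h : M.IsHermitian) : ℕ :=
  (univ.filter fun i => h.eigenvalues i < 0).card

noncomputable def cEquiv (h : M.IsHermitian) :
    (ι → ℝ) ≃ₗ[ℝ] (ι → ℝ) :=
  LinearEquiv.ofLinear (star (h.eigenvectorUnitary : Matrix ι ι ℝ)).mulVecLin
    (h.eigenvectorUnitary : Matrix ι ι ℝ).mulVecLin
    (by rw [← Matrix.mulVecLin_mul, Unitary.coe_star_mul_self, Matrix.mulVecLin_one])
    (by rw [← Matrix.mulVecLin_mul, ← Unitary.coe_star, Unitary.coe_mul_star_self,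
      Matrix.mulVecLin_one])

lemma qf_eq (h : M.IsHermitian) (x : ι → ℝ) :
    qf M x = ∑ i, h.eigenvalues i * (cEquiv h x i) ^ 2 := by
  have hstar : star (h.eigenvectorUnitary : Matrix ι ι ℝ)
      = (h.eigenvectorUnitary : Matrix ι ι ℝ)ᵀ := by
    ext i j; simp [Matrix.star_apply]
  have hc : cEquiv h x = (h.eigenvectorUnitary : Matrix ι ι ℝ)ᵀ *ᵥ x := by
    show star (h.eigenvectorUnitary : Matrix ι ι ℝ) *ᵥ x = _
    rw [hstar]
  rw [qf]
  conv_lhs => rw [h.spectral_theorem, Unitary.conjStarAlgAut_apply]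
  rw [← Matrix.mulVec_mulVec, ← Matrix.mulVec_mulVec, Matrix.dotProduct_mulVec, hstar,
    ← Matrix.mulVec_transpose, ← hc]
  simp only [RCLike.ofReal_real_eq_id, Function.comp_def, id_eq, dotProduct,
    Matrix.mulVec_diagonal]
  exact Finset.sum_congr rfl fun i _ => by ring

/-- Upper bound: any positive-definite subspace has dimension at most `pcard`. -/
lemma finrank_le_pcard (h : M.IsHermitian) (W : Submodule ℝ (ι → ℝ))
    (hW : PosOn M W) : Module.finrank ℝ W ≤ pcard h := by
  classical
  set s := univ.filter fun i => 0 < h.eigenvalues i with hs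
  let φ : W →ₗ[ℝ] ({i // i ∈ s} → ℝ) :=
    { toFun := fun x i => cEquiv h (x : ι → ℝ) i
      map_add' := by intro a b; ext i; simp
      map_smul' := by intro c a; ext i; simp }
  have hinj : Function.Injective φ := by
    rw [← LinearMap.ker_eq_bot, LinearMap.ker_eq_bot']
    intro ⟨x, hxW⟩ hker
    by_contra hne
    have hx : x ≠ 0 := by intro h0; exact hne (Subtype.ext (by simpa using h0))
    have hpos := hW x hxW hx
    have hzero : ∀ i ∈ s, cEquiv h x i = 0 := by
      intro i hi
      exact congrFun (congrArg (fun f => f) hker) ⟨i, hi⟩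
    have : qf M x ≤ 0 := by
      rw [qf_eq h]
      apply Finset.sum_nonpos
      intro i _
      by_cases hi : i ∈ s
      · rw [hzero i hi]; simp
      · have : ¬ (0 < h.eigenvalues i) := by simpa [hs] using hi
        exact mul_nonpos_of_nonpos_of_nonneg (le_of_not_gt this) (sq_nonneg _)
    linarith
  calc Module.finrank ℝ W ≤ Module.finrank ℝ ({i // i ∈ s} → ℝ) :=
        LinearMap.finrank_le_finrank_of_injective hinj
    _ = s.card := by simp [Module.finrank_fintype_fun_eq_card]
    _ = pcard h := rfl

lemma finrank_le_ncard (h : M.IsHermitian) (W : Submodule ℝ (ι → ℝ))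
    (hW : NegOn M W) : Module.finrank ℝ W ≤ ncard h := by
  classical
  set s := univ.filter fun i => h.eigenvalues i < 0 with hs
  let φ : W →ₗ[ℝ] ({i // i ∈ s} → ℝ) :=
    { toFun := fun x i => cEquiv h (x : ι → ℝ) i
      map_add' := by intro a b; ext i; simp
      map_smul' := by intro c a; ext i; simp }
  have hinj : Function.Injective φ := by
    rw [← LinearMap.ker_eq_bot, LinearMap.ker_eq_bot']
    intro ⟨x, hxW⟩ hker
    by_contra hne
    have hx : x ≠ 0 := by intro h0; exact hne (Subtype.ext (by simpa using h0))
    have hneg := hW x hxW hx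
    have hzero : ∀ i ∈ s, cEquiv h x i = 0 := by
      intro i hi
      exact congrFun (congrArg (fun f => f) hker) ⟨i, hi⟩
    have : 0 ≤ qf M x := by
      rw [qf_eq h]
      apply Finset.sum_nonneg
      intro i _
      by_cases hi : i ∈ s
      · rw [hzero i hi]; simp
      · have : ¬ (h.eigenvalues i < 0) := by simpa [hs] using hi
        exact mul_nonneg (le_of_not_gt this) (sq_nonneg _)
    linarith
  calc Module.finrank ℝ W ≤ Module.finrank ℝ ({i // i ∈ s} → ℝ) :=
        LinearMap.finrank_le_finrank_of_injective hinj
    _ = s.card := by simp [Module.finrank_fintype_fun_eq_card]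
    _ = ncard h := rfl

lemma exists_posOn (h : M.IsHermitian) :
    ∃ W : Submodule ℝ (ι → ℝ), PosOn M W ∧ Module.finrank ℝ W = pcard h := by
  classical
  set s := univ.filter fun i => 0 < h.eigenvalues i with hs
  let w : {i // i ∈ s} → (ι → ℝ) := fun i => (cEquiv h).symm (Pi.single (i : ι) 1)
  have hli : LinearIndependent ℝ w := by
    have h1 : LinearIndependent ℝ
        (fun i : {i // i ∈ s} => (Pi.single (i : ι) (1 : ℝ) : ι → ℝ)) := by
      have := (Pi.basisFun ℝ ι).linearIndependent.comp
        (Subtype.val : {i // i ∈ s} → ι) Subtype.val_injective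
      simpa [Function.comp_def] using this
    exact h1.map' (cEquiv h).symm.toLinearMap (LinearEquiv.ker _)
  have hcoord : ∀ x ∈ Submodule.span ℝ (Set.range w), ∀ i ∉ s, cEquiv h x i = 0 := by
    intro x hx
    induction hx using Submodule.span_induction with
    | mem x hxr =>
      obtain ⟨j, rfl⟩ := hxr
      intro i hi
      have : cEquiv h (w j) = Pi.single (j : ι) 1 := (cEquiv h).apply_symm_apply _
      rw [this, Pi.single_apply, if_neg]
      rintro rfl; exact hi j.2
    | zero => intro i _; simp
    | add x y _ _ hx hy => intro i hi; simp [hx i hi, hy i hi]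
    | smul c x _ hx => intro i hi; simp [hx i hi]
  refine ⟨Submodule.span ℝ (Set.range w), ?_, ?_⟩
  · intro x hx hxne
    rw [qf_eq h]
    have hcne : cEquiv h x ≠ 0 := by simpa using (cEquiv h).map_ne_zero_iff.mpr hxne
    obtain ⟨j, hj'⟩ := Function.ne_iff.mp hcne
    have hj : cEquiv h x j ≠ 0 := by simpa using hj'
    have hjs : j ∈ s := by
      by_contra hjs; exact hj (hcoord x hx j hjs)
    apply Finset.sum_pos'
    · intro i _
      by_cases hi : i ∈ s
      · have : 0 < h.eigenvalues i := by simpa [hs] using hi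
        positivity
      · rw [hcoord x hx i hi]; simp
    · refine ⟨j, Finset.mem_univ j, ?_⟩
      have hlam : 0 < h.eigenvalues j := by simpa [hs] using hjs
      positivity
  · rw [finrank_span_eq_card hli, Fintype.card_coe]; rfl

lemma exists_negOn (h : M.IsHermitian) :
    ∃ W : Submodule ℝ (ι → ℝ), NegOn M W ∧ Module.finrank ℝ W = ncard h := by
  classical
  set s := univ.filter fun i => h.eigenvalues i < 0 with hs
  let w : {i // i ∈ s} → (ι → ℝ) := fun i => (cEquiv h).symm (Pi.single (i : ι) 1)
  have hli : LinearIndependent ℝ w := by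
    have h1 : LinearIndependent ℝ
        (fun i : {i // i ∈ s} => (Pi.single (i : ι) (1 : ℝ) : ι → ℝ)) := by
      have := (Pi.basisFun ℝ ι).linearIndependent.comp
        (Subtype.val : {i // i ∈ s} → ι) Subtype.val_injective
      simpa [Function.comp_def] using this
    exact h1.map' (cEquiv h).symm.toLinearMap (LinearEquiv.ker _)
  have hcoord : ∀ x ∈ Submodule.span ℝ (Set.range w), ∀ i ∉ s, cEquiv h x i = 0 := by
    intro x hx
    induction hx using Submodule.span_induction with
    | mem x hxr =>
      obtain ⟨j, rfl⟩ := hxr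
      intro i hi
      have : cEquiv h (w j) = Pi.single (j : ι) 1 := (cEquiv h).apply_symm_apply _
      rw [this, Pi.single_apply, if_neg]
      rintro rfl; exact hi j.2
    | zero => intro i _; simp
    | add x y _ _ hx hy => intro i hi; simp [hx i hi, hy i hi]
    | smul c x _ hx => intro i hi; simp [hx i hi]
  refine ⟨Submodule.span ℝ (Set.range w), ?_, ?_⟩
  · intro x hx hxne
    rw [qf_eq h]
    have hcne : cEquiv h x ≠ 0 := by simpa using (cEquiv h).map_ne_zero_iff.mpr hxne
    obtain ⟨j, hj'⟩ := Function.ne_iff.mp hcne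
    have hj : cEquiv h x j ≠ 0 := by simpa using hj'
    have hjs : j ∈ s := by
      by_contra hjs; exact hj (hcoord x hx j hjs)
    have : 0 < ∑ i, -(h.eigenvalues i * (cEquiv h x i) ^ 2) := by
      apply Finset.sum_pos'
      · intro i _
        by_cases hi : i ∈ s
        · have : h.eigenvalues i < 0 := by simpa [hs] using hi
          nlinarith [sq_nonneg (cEquiv h x i)]
        · rw [hcoord x hx i hi]; simp
      · refine ⟨j, Finset.mem_univ j, ?_⟩
        have hlam : h.eigenvalues j < 0 := by simpa [hs] using hjs
        have := pow_pos (abs_pos.mpr hj) 2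
        nlinarith [pow_pos (abs_pos.mpr hj) 2, sq_abs (cEquiv h x j)]
    rw [Finset.sum_neg_distrib] at this
    linarith
  · rw [finrank_span_eq_card hli, Fintype.card_coe]; rfl

lemma pcard_le_of_equiv {κ : Type} [Fintype κ] [DecidableEq κ] {N : Matrix κ κ ℝ}
    (hM : M.IsHermitian) (hN : N.IsHermitian) (e : (ι → ℝ) ≃ₗ[ℝ] (κ → ℝ))
    (he : ∀ x, qf N (e x) = qf M x) : pcard hM ≤ pcard hN := by
  obtain ⟨W, hW, hrk⟩ := exists_posOn hM
  have hpos : PosOn N (W.map (e : (ι → ℝ) →ₗ[ℝ] (κ → ℝ))) := by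
    rintro y hy hyne
    obtain ⟨x, hxW, rfl⟩ := Submodule.mem_map.mp hy
    have hx : x ≠ 0 := by
      rintro rfl; exact hyne (by simp)
    rw [show ((e : (ι → ℝ) →ₗ[ℝ] (κ → ℝ)) x) = e x from rfl, he x]
    exact hW x hxW hx
  calc pcard hM = Module.finrank ℝ W := hrk.symm
    _ = Module.finrank ℝ (W.map (e : (ι → ℝ) →ₗ[ℝ] (κ → ℝ))) :=
        (LinearEquiv.finrank_map_eq e W).symm
    _ ≤ pcard hN := finrank_le_pcard hN _ hpos

lemma ncard_le_of_equiv {κ : Type} [Fintype κ] [DecidableEq κ] {N : Matrix κ κ ℝ}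
    (hM : M.IsHermitian) (hN : N.IsHermitian) (e : (ι → ℝ) ≃ₗ[ℝ] (κ → ℝ))
    (he : ∀ x, qf N (e x) = qf M x) : ncard hM ≤ ncard hN := by
  obtain ⟨W, hW, hrk⟩ := exists_negOn hM
  have hneg : NegOn N (W.map (e : (ι → ℝ) →ₗ[ℝ] (κ → ℝ))) := by
    rintro y hy hyne
    obtain ⟨x, hxW, rfl⟩ := Submodule.mem_map.mp hy
    have hx : x ≠ 0 := by
      rintro rfl; exact hyne (by simp)
    rw [show ((e : (ι → ℝ) →ₗ[ℝ] (κ → ℝ)) x) = e x from rfl, he x]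
    exact hW x hxW hx
  calc ncard hM = Module.finrank ℝ W := hrk.symm
    _ = Module.finrank ℝ (W.map (e : (ι → ℝ) →ₗ[ℝ] (κ → ℝ))) :=
        (LinearEquiv.finrank_map_eq e W).symm
    _ ≤ ncard hN := finrank_le_ncard hN _ hneg

lemma pcard_eq_of_equiv {κ : Type} [Fintype κ] [DecidableEq κ] {N : Matrix κ κ ℝ}
    (hM : M.IsHermitian) (hN : N.IsHermitian) (e : (ι → ℝ) ≃ₗ[ℝ] (κ → ℝ))
    (he : ∀ x, qf N (e x) = qf M x) : pcard hM = pcard hN := by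
  refine le_antisymm (pcard_le_of_equiv hM hN e he) (pcard_le_of_equiv hN hM e.symm ?_)
  intro y
  have := he (e.symm y)
  rw [e.apply_symm_apply] at this
  exact this.symm

lemma ncard_eq_of_equiv {κ : Type} [Fintype κ] [DecidableEq κ] {N : Matrix κ κ ℝ}
    (hM : M.IsHermitian) (hN : N.IsHermitian) (e : (ι → ℝ) ≃ₗ[ℝ] (κ → ℝ))
    (he : ∀ x, qf N (e x) = qf M x) : ncard hM = ncard hN := by
  refine le_antisymm (ncard_le_of_equiv hM hN e he) (ncard_le_of_equiv hN hM e.symm ?_)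
  intro y
  have := he (e.symm y)
  rw [e.apply_symm_apply] at this
  exact this.symm

lemma matSig_eq (h : M.IsHermitian) : matSig M = (pcard h : ℤ) - (ncard h : ℤ) := by
  rw [matSig, dif_pos h, pcard, ncard]


lemma matSig_conj (h : M.IsHermitian) {P : Matrix ι ι ℝ} (hP : IsUnit P.det) :
    matSig (Pᵀ * M * P) = matSig M := by
  have hconj : ∀ {a b : Type} (X : Matrix a b ℝ), Xᴴ = Xᵀ := by
    intro a b X; ext i j; simp [Matrix.conjTranspose_apply]
  have hMt : Mᵀ = M := by rw [← hconj]; exact h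
  have hM' : (Pᵀ * M * P).IsHermitian := by
    show (Pᵀ * M * P)ᴴ = _
    rw [hconj, Matrix.transpose_mul, Matrix.transpose_mul, Matrix.transpose_transpose, hMt,
      Matrix.mul_assoc]
  let e : (ι → ℝ) ≃ₗ[ℝ] (ι → ℝ) :=
    LinearEquiv.ofLinear P.mulVecLin P⁻¹.mulVecLin
      (by rw [← Matrix.mulVecLin_mul, Matrix.mul_nonsing_inv _ hP, Matrix.mulVecLin_one])
      (by rw [← Matrix.mulVecLin_mul, Matrix.nonsing_inv_mul _ hP, Matrix.mulVecLin_one])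
  have he : ∀ x, qf M (e x) = qf (Pᵀ * M * P) x := by
    intro x
    show (P *ᵥ x) ⬝ᵥ M *ᵥ (P *ᵥ x) = x ⬝ᵥ (Pᵀ * M * P) *ᵥ x
    conv_rhs => rw [← Matrix.mulVec_mulVec, ← Matrix.mulVec_mulVec,
      Matrix.dotProduct_mulVec x, Matrix.vecMul_transpose]
  rw [matSig_eq hM', matSig_eq h, pcard_eq_of_equiv hM' h e he, ncard_eq_of_equiv hM' h e he]

set_option maxHeartbeats 1000000 in
lemma matSig_oneBlock (h : M.IsHermitian) :
    matSig (Matrix.fromBlocks (1 : Matrix (Fin 1) (Fin 1) ℝ) 0 0 M) = 1 + matSig M := by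
  classical
  set N : Matrix (Fin 1 ⊕ ι) (Fin 1 ⊕ ι) ℝ := Matrix.fromBlocks 1 0 0 M with hNdef
  have hN : N.IsHermitian := by
    refine Matrix.IsHermitian.fromBlocks Matrix.isHermitian_one ?_ h
    simp
  have hdecomp : ∀ y : Fin 1 ⊕ ι → ℝ, y = Sum.elim (y ∘ Sum.inl) (y ∘ Sum.inr) := by
    intro y; funext i; cases i <;> rfl
  have hqfN : ∀ y : Fin 1 ⊕ ι → ℝ, qf N y = (y (Sum.inl 0))^2 + qf M (y ∘ Sum.inr) := by
    intro y
    have hy' : N *ᵥ y = Sum.elim (y ∘ Sum.inl) (M *ᵥ (y ∘ Sum.inr)) := by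
      conv_lhs => rw [hdecomp y]
      rw [hNdef, Matrix.fromBlocks_mulVec]
      simp
    rw [qf, hy']
    conv_lhs => rw [hdecomp y]
    rw [sumElim_dotProduct_sumElim, qf]
    congr 1
    simp [dotProduct, sq]
  set π : ((Fin 1 ⊕ ι) → ℝ) →ₗ[ℝ] (ι → ℝ) := LinearMap.funLeft ℝ ℝ Sum.inr with hπ
  have hπapp : ∀ y, π y = y ∘ Sum.inr := fun _ => rfl
  -- (1) 1 + pcard h ≤ pcard hN
  have hp_ge : 1 + pcard h ≤ pcard hN := by
    obtain ⟨W, hW, hrkW⟩ := exists_posOn h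
    set C := Submodule.comap π W with hC
    have hposC : PosOn N C := by
      intro y hy hyne
      have hmem : (y ∘ Sum.inr) ∈ W := hy
      rw [hqfN y]
      rcases eq_or_ne (y ∘ Sum.inr) 0 with h0 | h0
      · have hy0 : y (Sum.inl 0) ≠ 0 := by
          intro hz
          apply hyne
          funext i
          cases i with
          | inl i =>
            have : i = (0 : Fin 1) := Subsingleton.elim _ _
            rw [this]; exact hz
          | inr i => exact congrFun h0 i
        rw [h0, qf_zero]
        positivity
      · have := hW _ hmem h0
        nlinarith [sq_nonneg (y (Sum.inl 0))]
    have hrange : Submodule.map π C = W := by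
      rw [hC, Submodule.map_comap_eq]
      have hsurj : LinearMap.range π = ⊤ :=
        LinearMap.range_eq_top.mpr (fun x => ⟨Sum.elim 0 x, rfl⟩)
      rw [hsurj, top_inf_eq]
    have hkerpos : 0 < Module.finrank ℝ (LinearMap.ker (π.domRestrict C)) := by
      rw [Module.finrank_pos_iff (R := ℝ) (M := LinearMap.ker (π.domRestrict C))]
      have hy₀C : (Sum.elim (fun _ => (1:ℝ)) 0 : Fin 1 ⊕ ι → ℝ) ∈ C := by
        show π _ ∈ W
        have : π (Sum.elim (fun _ => (1:ℝ)) 0 : Fin 1 ⊕ ι → ℝ) = 0 := rfl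
        rw [this]; exact W.zero_mem
      refine ⟨⟨⟨Sum.elim (fun _ => (1:ℝ)) 0, hy₀C⟩, LinearMap.mem_ker.mpr rfl⟩, 0, ?_⟩
      intro hcontra
      have h2 : (⟨Sum.elim (fun _ => (1:ℝ)) 0, hy₀C⟩ : C) = 0 := Subtype.ext_iff.mp hcontra
      have h3 : (Sum.elim (fun _ => (1:ℝ)) 0 : Fin 1 ⊕ ι → ℝ) = 0 := Subtype.ext_iff.mp h2
      have := congrFun h3 (Sum.inl 0)
      simp at this
    have hrn := LinearMap.finrank_range_add_finrank_ker (π.domRestrict C)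
    rw [LinearMap.range_domRestrict, hrange] at hrn
    have hC_le := finrank_le_pcard hN C hposC
    omega
  -- (2) ncard h ≤ ncard hN
  have hq_ge : ncard h ≤ ncard hN := by
    obtain ⟨W, hW, hrkW⟩ := exists_negOn h
    set C := Submodule.comap π W ⊓ LinearMap.ker (LinearMap.funLeft ℝ ℝ Sum.inl) with hC
    have hnegC : NegOn N C := by
      intro y hy hyne
      obtain ⟨hy1, hy2⟩ := hy
      have hinl : y ∘ Sum.inl = 0 := hy2
      have hinr : (y ∘ Sum.inr) ≠ 0 := by
        intro h0
        apply hyne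
        conv_lhs => rw [hdecomp y]
        rw [hinl, h0]
        funext i; cases i <;> rfl
      have hy0 : y (Sum.inl 0) = 0 := congrFun hinl 0
      rw [hqfN y, hy0]
      have hy1' : y ∘ Sum.inr ∈ W := hy1
      have := hW _ hy1' hinr
      nlinarith
    have hker : LinearMap.ker (π.domRestrict C) = ⊥ := by
      rw [LinearMap.ker_eq_bot']
      rintro ⟨y, hyC⟩ hker
      have hinr : y ∘ Sum.inr = 0 := hker
      have hinl : y ∘ Sum.inl = 0 := hyC.2
      apply Subtype.ext
      show y = 0
      conv_lhs => rw [hdecomp y]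
      rw [hinl, hinr]
      funext i; cases i <;> rfl
    have hrange : Submodule.map π C = W := by
      apply le_antisymm
      · rintro z ⟨y, hyC, rfl⟩
        exact hyC.1
      · intro x hx
        refine ⟨Sum.elim 0 x, ⟨?_, ?_⟩, rfl⟩
        · show ((Sum.elim 0 x : Fin 1 ⊕ ι → ℝ) ∘ Sum.inr) ∈ W
          exact hx
        · show ((Sum.elim 0 x : Fin 1 ⊕ ι → ℝ) ∘ Sum.inl) = 0
          rfl
    have hrn := LinearMap.finrank_range_add_finrank_ker (π.domRestrict C)
    rw [LinearMap.range_domRestrict, hrange, hker] at hrn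
    simp only [finrank_bot, add_zero] at hrn
    have hC_le := finrank_le_ncard hN C hnegC
    omega
  -- (3) pcard hN ≤ 1 + pcard h
  have hp_le : pcard hN ≤ 1 + pcard h := by
    obtain ⟨W', hW', hrkW'⟩ := exists_posOn hN
    set ev : ((Fin 1 ⊕ ι) → ℝ) →ₗ[ℝ] ℝ :=
      LinearMap.proj (R := ℝ) (φ := fun _ : Fin 1 ⊕ ι => ℝ) (Sum.inl 0) with hev
    set φ := ev.domRestrict W' with hφ
    have h1 : Module.finrank ℝ (LinearMap.range φ) ≤ 1 := by
      have := Submodule.finrank_le (LinearMap.range φ)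
      simpa using this
    set K := Submodule.map W'.subtype (LinearMap.ker φ) with hK
    have hfinK : Module.finrank ℝ K = Module.finrank ℝ (LinearMap.ker φ) :=
      Submodule.finrank_map_subtype_eq W' _
    have hKprop : ∀ y ∈ K, y ∈ W' ∧ y (Sum.inl 0) = 0 := by
      rintro y ⟨⟨y', hy'W⟩, hker, rfl⟩
      exact ⟨hy'W, LinearMap.mem_ker.mp hker⟩
    have hkerU : LinearMap.ker (π.domRestrict K) = ⊥ := by
      rw [LinearMap.ker_eq_bot']
      rintro ⟨y, hyK⟩ hker
      obtain ⟨hyW, hy0⟩ := hKprop y hyK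
      have hinr : y ∘ Sum.inr = 0 := hker
      apply Subtype.ext
      show y = 0
      conv_lhs => rw [hdecomp y]
      rw [hinr]
      funext i
      cases i with
      | inl i =>
        have : i = (0 : Fin 1) := Subsingleton.elim _ _
        simp [this, hy0]
      | inr i => rfl
    have hposU : PosOn M (Submodule.map π K) := by
      rintro z ⟨y, hyK, rfl⟩ hzne
      obtain ⟨hyW, hy0⟩ := hKprop y hyK
      have hyne : y ≠ 0 := by
        rintro rfl; exact hzne (by simp)
      have := hW' y hyW hyne
      rw [hqfN y, hy0] at this
      have hz : π y = y ∘ Sum.inr := rfl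
      rw [hz]
      nlinarith
    have hrnU := LinearMap.finrank_range_add_finrank_ker (π.domRestrict K)
    rw [LinearMap.range_domRestrict, hkerU] at hrnU
    simp only [finrank_bot, add_zero] at hrnU
    have hU_le : Module.finrank ℝ (Submodule.map π K) ≤ pcard h :=
      finrank_le_pcard h _ hposU
    have hrn := LinearMap.finrank_range_add_finrank_ker φ
    -- finrank range φ + finrank ker φ = finrank W'
    omega
  -- (4) ncard hN ≤ ncard h
  have hq_le : ncard hN ≤ ncard h := by
    obtain ⟨W', hW', hrkW'⟩ := exists_negOn hN
    have hkerU : LinearMap.ker (π.domRestrict W') = ⊥ := by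
      rw [LinearMap.ker_eq_bot']
      rintro ⟨y, hyW⟩ hker
      have hinr : y ∘ Sum.inr = 0 := hker
      by_contra hne
      have hyne : y ≠ 0 := by
        intro h0; exact hne (Subtype.ext (by simpa using h0))
      have hlt := hW' y hyW hyne
      rw [hqfN y] at hlt
      have : qf M (y ∘ Sum.inr) = 0 := by rw [hinr, qf_zero]
      nlinarith [sq_nonneg (y (Sum.inl 0))]
    have hnegU : NegOn M (Submodule.map π W') := by
      rintro z ⟨y, hyW, rfl⟩ hzne
      have hyne : y ≠ 0 := by
        rintro rfl; exact hzne (by simp)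
      have hlt := hW' y hyW hyne
      rw [hqfN y] at hlt
      have hz : π y = y ∘ Sum.inr := rfl
      rw [hz]
      nlinarith [sq_nonneg (y (Sum.inl 0))]
    have hrnU := LinearMap.finrank_range_add_finrank_ker (π.domRestrict W')
    rw [LinearMap.range_domRestrict, hkerU] at hrnU
    simp only [finrank_bot, add_zero] at hrnU
    have hU_le : Module.finrank ℝ (Submodule.map π W') ≤ ncard h :=
      finrank_le_ncard h _ hnegU
    omega
  have e1 : pcard hN = 1 + pcard h := le_antisymm hp_le hp_ge
  have e2 : ncard hN = ncard h := le_antisymm hq_le hq_ge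
  rw [matSig_eq hN, matSig_eq h, e1, e2]
  push_cast
  ring

end SigAux

/-- The matrix computation underlying the fact that the differential of the diagramless
chain complex increases the signature grading by exactly `+1`:
`sig [[1,1,0],[1,m,R],[0,Rᵀ,A]] = 1 + sig [[m-1,R],[Rᵀ,A]]`. -/
theorem signature_differential_step {n : ℕ} (m : ℝ)
    (R : Matrix (Fin 1) (Fin n) ℝ) (A : Matrix (Fin n) (Fin n) ℝ) (hA : A.IsSymm) :
    matSig (Matrix.fromBlocks
        (1 : Matrix (Fin 1) (Fin 1) ℝ)
        (Matrix.fromCols (1 : Matrix (Fin 1) (Fin 1) ℝ) (0 : Matrix (Fin 1) (Fin n) ℝ))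
        (Matrix.fromRows (1 : Matrix (Fin 1) (Fin 1) ℝ) (0 : Matrix (Fin n) (Fin 1) ℝ))
        (Matrix.fromBlocks (Matrix.of fun _ _ => m) R Rᵀ A))
      = 1 + matSig (Matrix.fromBlocks (Matrix.of fun _ _ => m - 1) R Rᵀ A) := by
  classical
  have hconj : ∀ {a b : Type} (X : Matrix a b ℝ), Xᴴ = Xᵀ := by
    intro a b X; ext i j; simp [Matrix.conjTranspose_apply]
  set G' : Matrix (Fin 1 ⊕ Fin n) (Fin 1 ⊕ Fin n) ℝ :=
    Matrix.fromBlocks (Matrix.of fun _ _ => m - 1) R Rᵀ A with hG'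
  have hG'h : G'.IsHermitian := by
    refine Matrix.IsHermitian.fromBlocks ?_ ?_ ?_
    · show (Matrix.of fun _ _ => (m - 1 : ℝ))ᴴ = _
      rw [hconj]
      ext i j
      simp [Matrix.transpose_apply]
    · rw [hconj]
    · show Aᴴ = A
      rw [hconj]; exact hA
  have hNherm : (Matrix.fromBlocks (1 : Matrix (Fin 1) (Fin 1) ℝ) 0 0 G').IsHermitian := by
    refine Matrix.IsHermitian.fromBlocks Matrix.isHermitian_one ?_ hG'h
    simp
  set P : Matrix (Fin 1 ⊕ (Fin 1 ⊕ Fin n)) (Fin 1 ⊕ (Fin 1 ⊕ Fin n)) ℝ :=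
    Matrix.fromBlocks 1 (Matrix.fromCols 1 0) 0 1 with hP
  have hPdet : IsUnit P.det := by
    rw [hP, Matrix.det_fromBlocks_zero₂₁]
    simp
  have hPT : Pᵀ = Matrix.fromBlocks 1 0
      (Matrix.fromRows (1 : Matrix (Fin 1) (Fin 1) ℝ) (0 : Matrix (Fin n) (Fin 1) ℝ)) 1 := by
    rw [hP, Matrix.fromBlocks_transpose, Matrix.transpose_one, Matrix.transpose_one,
      Matrix.transpose_zero, Matrix.transpose_fromCols]
    simp
  have hblock : Matrix.fromRows (1 : Matrix (Fin 1) (Fin 1) ℝ) (0 : Matrix (Fin n) (Fin 1) ℝ) *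
      Matrix.fromCols (1 : Matrix (Fin 1) (Fin 1) ℝ) (0 : Matrix (Fin 1) (Fin n) ℝ) +
      G' = Matrix.fromBlocks (Matrix.of fun _ _ => m) R Rᵀ A := by
    rw [Matrix.fromRows_mul_fromCols, hG', Matrix.fromBlocks_add]
    ext (i | i) (j | j) <;>
      simp [Matrix.one_apply, Fin.eq_zero, Matrix.mul_apply]
  have key : Pᵀ * Matrix.fromBlocks (1 : Matrix (Fin 1) (Fin 1) ℝ) 0 0 G' * P
      = Matrix.fromBlocks 1
          (Matrix.fromCols (1 : Matrix (Fin 1) (Fin 1) ℝ) (0 : Matrix (Fin 1) (Fin n) ℝ))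
          (Matrix.fromRows (1 : Matrix (Fin 1) (Fin 1) ℝ) (0 : Matrix (Fin n) (Fin 1) ℝ))
          (Matrix.fromBlocks (Matrix.of fun _ _ => m) R Rᵀ A) := by
    rw [hPT, hP, Matrix.fromBlocks_multiply, Matrix.fromBlocks_multiply]
    simp only [Matrix.one_mul, Matrix.mul_one, Matrix.zero_mul, Matrix.mul_zero, add_zero,
      zero_add]
    rw [hblock]
  calc matSig (Matrix.fromBlocks
        (1 : Matrix (Fin 1) (Fin 1) ℝ)
        (Matrix.fromCols (1 : Matrix (Fin 1) (Fin 1) ℝ) (0 : Matrix (Fin 1) (Fin n) ℝ))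
        (Matrix.fromRows (1 : Matrix (Fin 1) (Fin 1) ℝ) (0 : Matrix (Fin n) (Fin 1) ℝ))
        (Matrix.fromBlocks (Matrix.of fun _ _ => m) R Rᵀ A))
      = matSig (Pᵀ * Matrix.fromBlocks (1 : Matrix (Fin 1) (Fin 1) ℝ) 0 0 G' * P) := by
        rw [key]
    _ = matSig (Matrix.fromBlocks (1 : Matrix (Fin 1) (Fin 1) ℝ) 0 0 G') :=
        SigAux.matSig_conj hNherm hPdet
    _ = 1 + matSig G' := SigAux.matSig_oneBlock hG'h
end

section
/- Let R = ℤ[h,t] and A = R[x]/(x² − h·x − t), with x the adjoined root. Let Δ : A → A ⊗_R A be the R-linear map determined on the basis {1, x} by Δ(1) = 1⊗x + x⊗1 − h•(1⊗1) and Δ(x) = t•(1⊗1) + x⊗x. Then Δ is coassociative: for every a ∈ A, applying Δ to the left tensor factor of Δ(a) equals (under the canonical associativity isomorphism (A ⊗_R A) ⊗_R A ≅ A ⊗_R (A ⊗_R A)) the result of applying Δ to the right tensor factor of Δ(a); that is, (Δ ⊗ Id) ∘ Δ = (Id ⊗ Δ) ∘ Δ. -/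
set_option maxHeartbeats 1000000
set_option synthInstance.maxHeartbeats 200000


open TensorProduct

noncomputable section

/-- The ground ring `R = ℤ[h,t]`, the polynomial ring in two variables over `ℤ`. -/
abbrev Rht : Type := MvPolynomial (Fin 2) ℤ

/-- The variable `h` of `ℤ[h,t]`. -/
def hR : Rht := MvPolynomial.X 0

/-- The variable `t` of `ℤ[h,t]`. -/
def tR : Rht := MvPolynomial.X 1

/-- The polynomial `x² − h·x − t` over `ℤ[h,t]`. -/
def pht : Polynomial Rht :=
  Polynomial.X ^ 2 - Polynomial.C hR * Polynomial.X - Polynomial.C tR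

/-- The algebra `A = R[x]/(x² − h·x − t)` of the universal rank-two Frobenius system. -/
abbrev Aht : Type := AdjoinRoot pht

/-- The adjoined root `x` of `A = R[x]/(x² − h·x − t)`. -/
def xA : Aht := AdjoinRoot.root pht

end

lemma pht_monic : pht.Monic := by
  unfold pht
  monicity!

lemma pht_natDegree : pht.natDegree = 2 := by
  unfold pht
  compute_degree!

/-- The comultiplication `Δ` of the universal rank-two Frobenius system `𝓕₅`, determined
by `Δ(1) = 1⊗x + x⊗1 − h•(1⊗1)` and `Δ(x) = t•(1⊗1) + x⊗x`, is coassociative: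
`(Δ ⊗ Id) ∘ Δ = (Id ⊗ Δ) ∘ Δ` under the canonical associativity isomorphism. -/
theorem comul_coassociative
    (Δ : Aht →ₗ[Rht] Aht ⊗[Rht] Aht)
    (hΔ1 : Δ 1 = (1 : Aht) ⊗ₜ[Rht] xA + xA ⊗ₜ[Rht] (1 : Aht)
      - hR • ((1 : Aht) ⊗ₜ[Rht] (1 : Aht)))
    (hΔx : Δ xA = tR • ((1 : Aht) ⊗ₜ[Rht] (1 : Aht)) + xA ⊗ₜ[Rht] xA) :
    ∀ a : Aht,
      (TensorProduct.assoc Rht Aht Aht Aht)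
          ((TensorProduct.map Δ LinearMap.id) (Δ a))
        = (TensorProduct.map LinearMap.id Δ) (Δ a) := by
  have h1 : (TensorProduct.assoc Rht Aht Aht Aht)
      ((TensorProduct.map Δ LinearMap.id) (Δ 1))
      = (TensorProduct.map LinearMap.id Δ) (Δ 1) := by
    simp [hΔ1, hΔx, tmul_add, add_tmul, sub_tmul, tmul_sub, tmul_smul,
      ← smul_tmul', smul_sub, smul_add, smul_smul]
    module
  have hx : (TensorProduct.assoc Rht Aht Aht Aht)
      ((TensorProduct.map Δ LinearMap.id) (Δ xA))
      = (TensorProduct.map LinearMap.id Δ) (Δ xA) := by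
    simp [hΔ1, hΔx, tmul_add, add_tmul, sub_tmul, tmul_sub, tmul_smul,
      ← smul_tmul', smul_sub, smul_add, smul_smul]
    module
  have key : (TensorProduct.assoc Rht Aht Aht Aht).toLinearMap ∘ₗ
      (TensorProduct.map Δ LinearMap.id) ∘ₗ Δ
      = (TensorProduct.map LinearMap.id Δ) ∘ₗ Δ := by
    apply (AdjoinRoot.powerBasis' pht_monic).basis.ext
    intro i
    rw [(AdjoinRoot.powerBasis' pht_monic).basis_eq_pow]
    have hi : (i : ℕ) < 2 :=
      lt_of_lt_of_le i.2 (le_of_eq (by rw [AdjoinRoot.powerBasis'_dim, pht_natDegree]))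
    obtain h | h : (i : ℕ) = 0 ∨ (i : ℕ) = 1 := by omega
    · rw [h]
      simp only [AdjoinRoot.powerBasis'_gen, pow_zero, LinearMap.comp_apply,
        LinearEquiv.coe_coe]
      exact h1
    · rw [h]
      simp only [AdjoinRoot.powerBasis'_gen, pow_one, LinearMap.comp_apply,
        LinearEquiv.coe_coe]
      exact hx
  intro a
  exact LinearMap.congr_fun key a
end

section
/- Fix k : ℕ and let m : Fin k → Bool be a crosscut state. For i, j : Fin k with i ≠ j, m(i) = false, and m(j) = false, the following sign identity holds: (−1)^{α(m, i)} · (−1)^{α(update m i true, j)} = − (−1)^{α(m, j)} · (−1)^{α(update m j true, i)}. -/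
/-- For a crosscut state `m : Fin k → Bool` (with `true` = inactive, `false` = active),
`crossAlpha m j` is the number of inactive crosscuts preceding position `j`. -/
def crossAlpha {k : ℕ} (m : Fin k → Bool) (j : Fin k) : ℕ :=
  (Finset.univ.filter fun l : Fin k => l < j ∧ m l = true).card

lemma crossAlpha_update_gt {k : ℕ} (m : Fin k → Bool) {i j : Fin k} (h : i < j)
    (hi : m i = false) :
    crossAlpha (Function.update m i true) j = crossAlpha m j + 1 := by
  unfold crossAlpha
  have : (Finset.univ.filter fun l : Fin k => l < j ∧ Function.update m i true l = true)
      = insert i (Finset.univ.filter fun l : Fin k => l < j ∧ m l = true) := by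
    ext l
    by_cases hl : l = i
    · subst hl; simp [h, hi]
    · simp [Function.update_of_ne hl, hl]
  rw [this, Finset.card_insert_of_notMem (by simp [hi])]

lemma crossAlpha_update_lt {k : ℕ} (m : Fin k → Bool) {i j : Fin k} (h : i < j) :
    crossAlpha (Function.update m j true) i = crossAlpha m i := by
  unfold crossAlpha
  congr 1
  ext l
  by_cases hl : l = j
  · subst hl
    simp only [Finset.mem_filter, Finset.mem_univ, true_and, Function.update_self]
    constructor
    · rintro ⟨hji, -⟩; exact absurd (lt_trans hji h) (lt_irrefl _)
    · rintro ⟨hji, -⟩; exact absurd (lt_trans hji h) (lt_irrefl _)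
  · simp [Function.update_of_ne hl]

/-- The sign identity expressing that the signed local differentials of the diagramless
chain complex negatively commute, so that `d ∘ d = 0`. -/
theorem signs_anticommute {k : ℕ} (m : Fin k → Bool) (i j : Fin k) (hij : i ≠ j)
    (hi : m i = false) (hj : m j = false) :
    (-1 : ℤ) ^ crossAlpha m i * (-1) ^ crossAlpha (Function.update m i true) j
      = -((-1 : ℤ) ^ crossAlpha m j * (-1) ^ crossAlpha (Function.update m j true) i) := by
  rcases lt_or_gt_of_ne hij with h | h
  · rw [crossAlpha_update_gt m h hi, crossAlpha_update_lt m h]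
    ring
  · rw [crossAlpha_update_gt m h hj, crossAlpha_update_lt m h]
    ring
end

section
/- Fix k : ℕ and i : Fin k with i + 1 < k, and let σ be the transposition of positions i and i+1 in Fin k. For a crosscut state m : Fin k → Bool, define s(m) = −1 if m(i) = true and m(i+1) = true, and s(m) = 1 otherwise. Then for every j : Fin k with m(j) = false, the following sign identity holds: (−1)^{α(m, j)} · s(update m j true) = s(m) · (−1)^{α(m ∘ σ, σ(j))}. -/
/-- The weight of the map `ψ_σ` on a crosscut state: `-1` if both the crosscuts at
positions `i` and `i'` are inactive, and `+1` otherwise. -/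
def psiSign {k : ℕ} (i i' : Fin k) (m : Fin k → Bool) : ℤ :=
  if m i = true ∧ m i' = true then -1 else 1

lemma alpha_swap {k : ℕ} (m : Fin k → Bool) (a b : Fin k) (j : Fin k) :
    crossAlpha (m ∘ (Equiv.swap a b)) ((Equiv.swap a b) j)
      = (Finset.univ.filter fun l : Fin k =>
          (Equiv.swap a b) l < (Equiv.swap a b) j ∧ m l = true).card := by
  unfold crossAlpha
  apply Finset.card_bij' (fun l _ => (Equiv.swap a b) l) (fun l _ => (Equiv.swap a b) l)
  · intro l hl
    simp only [Finset.mem_filter, Finset.mem_univ, true_and, Function.comp] at hl ⊢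
    simpa [Equiv.swap_apply_self] using hl
  · intro l hl
    simp only [Finset.mem_filter, Finset.mem_univ, true_and, Function.comp] at hl ⊢
    simpa [Equiv.swap_apply_self] using hl
  · intro l _; simp
  · intro l _; simp

/-- The sign identity expressing that `ψ_σ`, for `σ` the adjacent transposition of the
crosscuts `i` and `i+1`, commutes with the signed local differentials, i.e. is a chain
map between the Bar-Natan complexes for the two crosscut orderings. -/
theorem psi_sigma_chain_map {k : ℕ} (i : Fin k) (h : (i : ℕ) + 1 < k)
    (m : Fin k → Bool) (j : Fin k) (hj : m j = false) :
    (-1 : ℤ) ^ crossAlpha m j * psiSign i ⟨(i : ℕ) + 1, h⟩ (Function.update m j true)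
      = psiSign i ⟨(i : ℕ) + 1, h⟩ m *
          (-1) ^ crossAlpha (m ∘ (Equiv.swap i ⟨(i : ℕ) + 1, h⟩))
            ((Equiv.swap i ⟨(i : ℕ) + 1, h⟩) j) := by
  set i' : Fin k := ⟨(i : ℕ) + 1, h⟩ with hi'
  have hne : i ≠ i' := by simp [hi', Fin.ext_iff]
  have hne2 : i' ≠ i := Ne.symm hne
  rw [alpha_swap]
  rcases eq_or_ne j i with heq | hji
  · rw [heq] at hj ⊢
    have hmj : m i = false := hj
    have hcond : ∀ l : Fin k,
        ((Equiv.swap i i') l < (Equiv.swap i i') i ∧ m l = true)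
          ↔ ((l < i ∧ m l = true) ∨ (l = i' ∧ m i' = true)) := by
      intro l
      rw [Equiv.swap_apply_left]
      rcases eq_or_ne l i with rfl | hli
      · simp [Equiv.swap_apply_left, hmj, Fin.lt_def, hi', hne, Fin.ext_iff]
      rcases eq_or_ne l i' with rfl | hli'
      · simp [Equiv.swap_apply_right, Fin.lt_def, hi']
      · rw [Equiv.swap_apply_of_ne_of_ne hli hli']
        simp only [Fin.lt_def, hi']
        constructor
        · rintro ⟨h1, h2⟩
          left; refine ⟨?_, h2⟩
          have : (l : ℕ) ≠ (i : ℕ) := fun hc => hli (Fin.ext hc)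
          omega
        · rintro (⟨h1, h2⟩ | ⟨h1, _⟩)
          · exact ⟨by omega, h2⟩
          · exact absurd h1 hli'
    rw [Finset.filter_congr (fun l _ => by exact_mod_cast (hcond l))]
    cases hb : m i' with
    | false =>
      simp only [Bool.false_eq_true, and_false, or_false]
      have : psiSign i i' (Function.update m i true) = 1 := by
        simp [psiSign, Function.update_of_ne hne2, hb]
      have hm : psiSign i i' m = 1 := by simp [psiSign, hmj]
      rw [this, hm, crossAlpha]
      ring
    | true =>
      simp only [eq_self_iff_true, and_true]
      have hfil : (Finset.univ.filter fun l : Fin k => l < i ∧ m l = true ∨ l = i')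
          = insert i' (Finset.univ.filter fun l : Fin k => l < i ∧ m l = true) := by
        ext l
        simp only [Finset.mem_filter, Finset.mem_univ, true_and, Finset.mem_insert]
        tauto
      have hni : i' ∉ (Finset.univ.filter fun l : Fin k => l < i ∧ m l = true) := by
        simp only [Finset.mem_filter, Finset.mem_univ, true_and, not_and]
        intro hc
        exact absurd hc (by simp [Fin.lt_def, hi'])
      rw [hfil, Finset.card_insert_of_notMem hni]
      have h1 : psiSign i i' (Function.update m i true) = -1 := by
        simp [psiSign, Function.update_of_ne hne2, hb]
      have hm : psiSign i i' m = 1 := by simp [psiSign, hmj]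
      rw [h1, hm, crossAlpha]
      ring
  rcases eq_or_ne j i' with heq | hji'
  · rw [heq] at hj ⊢
    have hmj : m i' = false := hj
    have hcond : ∀ l : Fin k,
        ((Equiv.swap i i') l < (Equiv.swap i i') i' ∧ m l = true)
          ↔ (l < i ∧ m l = true) := by
      intro l
      rw [Equiv.swap_apply_right]
      rcases eq_or_ne l i with rfl | hli
      · simp [Equiv.swap_apply_left, Fin.lt_def, hi']
      rcases eq_or_ne l i' with rfl | hli'
      · simp [Equiv.swap_apply_right, Fin.lt_def, hi']
      · rw [Equiv.swap_apply_of_ne_of_ne hli hli']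
    rw [Finset.filter_congr (fun l _ => by exact_mod_cast (hcond l))]
    cases hb : m i with
    | false =>
      have hcl : ∀ l : Fin k, (l < i' ∧ m l = true) ↔ (l < i ∧ m l = true) := by
        intro l
        rcases eq_or_ne l i with rfl | hli
        · simp [hb]
        · simp only [Fin.lt_def, hi']
          have : (l : ℕ) ≠ (i : ℕ) := fun hc => hli (Fin.ext hc)
          constructor
          · rintro ⟨h1, h2⟩; exact ⟨by omega, h2⟩
          · rintro ⟨h1, h2⟩; exact ⟨by omega, h2⟩
      have : crossAlpha m i' = (Finset.univ.filter fun l : Fin k => l < i ∧ m l = true).card := by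
        rw [crossAlpha]
        congr 1
        exact Finset.filter_congr (fun l _ => by exact_mod_cast (hcl l))
      rw [this]
      have h1 : psiSign i i' (Function.update m i' true) = 1 := by
        simp [psiSign, Function.update_of_ne hne, hb]
      have hm : psiSign i i' m = 1 := by simp [psiSign, hmj]
      rw [h1, hm]; ring
    | true =>
      have hcl : ∀ l : Fin k, (l < i' ∧ m l = true) ↔ ((l < i ∧ m l = true) ∨ l = i) := by
        intro l
        rcases eq_or_ne l i with rfl | hli
        · simp [hb, Fin.lt_def, hi']
        · simp only [Fin.lt_def, hi', hli, or_false]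
          have : (l : ℕ) ≠ (i : ℕ) := fun hc => hli (Fin.ext hc)
          constructor
          · rintro ⟨h1, h2⟩; exact ⟨by omega, h2⟩
          · rintro ⟨h1, h2⟩; exact ⟨by omega, h2⟩
      have hfil : (Finset.univ.filter fun l : Fin k => l < i' ∧ m l = true)
          = insert i (Finset.univ.filter fun l : Fin k => l < i ∧ m l = true) := by
        ext l
        simp only [Finset.mem_filter, Finset.mem_univ, true_and, Finset.mem_insert]
        rw [hcl l]; tauto
      have hni : i ∉ (Finset.univ.filter fun l : Fin k => l < i ∧ m l = true) := by
        simp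
      have hca : crossAlpha m i'
          = (Finset.univ.filter fun l : Fin k => l < i ∧ m l = true).card + 1 := by
        rw [crossAlpha, hfil, Finset.card_insert_of_notMem hni]
      rw [hca]
      have h1 : psiSign i i' (Function.update m i' true) = -1 := by
        simp [psiSign, Function.update_of_ne hne, hb]
      have hm : psiSign i i' m = 1 := by simp [psiSign, hmj]
      rw [h1, hm]; ring
  · -- j ∉ {i, i'}
    have hsj : (Equiv.swap i i') j = j := Equiv.swap_apply_of_ne_of_ne hji hji'
    rw [hsj]
    have hcond : ∀ l : Fin k, ((Equiv.swap i i') l < j ∧ m l = true) ↔ (l < j ∧ m l = true) := by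
      intro l
      rcases eq_or_ne l i with rfl | hli
      · rw [Equiv.swap_apply_left]
        simp only [Fin.lt_def, hi']
        have h1 : (j : ℕ) ≠ (l : ℕ) := fun hc => hji (Fin.ext hc)
        have h2 : (j : ℕ) ≠ (l : ℕ) + 1 := fun hc => hji' (Fin.ext hc)
        constructor
        · rintro ⟨ha, hb⟩; exact ⟨by omega, hb⟩
        · rintro ⟨ha, hb⟩; exact ⟨by omega, hb⟩
      rcases eq_or_ne l i' with rfl | hli'
      · rw [Equiv.swap_apply_right]
        simp only [Fin.lt_def, hi']
        have h1 : (j : ℕ) ≠ (i : ℕ) := fun hc => hji (Fin.ext hc)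
        have h2 : (j : ℕ) ≠ (i : ℕ) + 1 := fun hc => hji' (Fin.ext hc)
        constructor
        · rintro ⟨ha, hb⟩; exact ⟨by omega, hb⟩
        · rintro ⟨ha, hb⟩; exact ⟨by omega, hb⟩
      · rw [Equiv.swap_apply_of_ne_of_ne hli hli']
    rw [Finset.filter_congr (fun l _ => by exact_mod_cast (hcond l))]
    have h1 : psiSign i i' (Function.update m j true) = psiSign i i' m := by
      simp [psiSign, Function.update_of_ne (Ne.symm hji), Function.update_of_ne (Ne.symm hji')]
    rw [h1, crossAlpha]
    ring
end

section
/- Let A = ℤ[x]/(x²) and let Δ : A → A ⊗_ℤ A be the ℤ-linear map determined on the basis {1, x} by Δ(1) = 1⊗x + x⊗1 and Δ(x) = x⊗x. Then Δ is injective, and the quotient ℤ-module (A ⊗_ℤ A) / range(Δ) is free of rank 2. -/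
open TensorProduct

noncomputable section

/-- The polynomial `x²` over `ℤ`. -/
def pSq : Polynomial ℤ := Polynomial.X ^ 2

/-- The algebra `A = ℤ[x]/(x²)` of the Frobenius system `𝓕₁`. -/
abbrev Asq : Type := AdjoinRoot pSq

/-- The adjoined root `x` of `A = ℤ[x]/(x²)`. -/
def xSq : Asq := AdjoinRoot.root pSq

end

set_option maxHeartbeats 1000000

/-- The comultiplication `Δ` of `𝓕₁`, determined by `Δ(1) = 1⊗x + x⊗1` and
`Δ(x) = x⊗x`, is injective, and the quotient `(A ⊗_ℤ A) / range Δ` is a free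
`ℤ`-module of rank `2`. -/
theorem comul_injective_quotient_free_rank_two
    (Δ : Asq →ₗ[ℤ] Asq ⊗[ℤ] Asq)
    (hΔ1 : Δ 1 = (1 : Asq) ⊗ₜ[ℤ] xSq + xSq ⊗ₜ[ℤ] (1 : Asq))
    (hΔx : Δ xSq = xSq ⊗ₜ[ℤ] xSq) :
    Function.Injective Δ ∧
      Module.Free ℤ ((Asq ⊗[ℤ] Asq) ⧸ LinearMap.range Δ) ∧
      Module.finrank ℤ ((Asq ⊗[ℤ] Asq) ⧸ LinearMap.range Δ) = 2 := by
  have hmon : pSq.Monic := Polynomial.monic_X_pow 2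
  have hdeg : pSq.natDegree = 2 := by simp [pSq]
  let pb := AdjoinRoot.powerBasis' hmon
  let b : Module.Basis (Fin 2) ℤ Asq := pb.basis.reindex (finCongr hdeg)
  have hb : ∀ i : Fin 2, b i = AdjoinRoot.root pSq ^ (i : ℕ) := by
    intro i
    simp only [b, Module.Basis.reindex_apply, pb.basis_eq_pow]
    simp [pb]
    rfl
  have hb0 : b 0 = 1 := by simp [hb]
  have hb1 : b 1 = xSq := by simp [hb, xSq]
  let T : Module.Basis (Fin 2 × Fin 2) ℤ (Asq ⊗[ℤ] Asq) := Module.Basis.tensorProduct b b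
  have hT : ∀ i j : Fin 2, T (i, j) = b i ⊗ₜ[ℤ] b j := fun i j => Module.Basis.tensorProduct_apply b b i j
  -- coordinates of v1 and v3
  have hv1 : (1 : Asq) ⊗ₜ[ℤ] xSq + xSq ⊗ₜ[ℤ] (1 : Asq) = T (0, 1) + T (1, 0) := by
    rw [hT, hT, hb0, hb1]
  have hv3 : xSq ⊗ₜ[ℤ] xSq = T (1, 1) := by rw [hT, hb1]
  have hcoord : ∀ (i j : Fin 2) (z : Asq ⊗[ℤ] Asq), T.coord (i, j) z = T.repr z (i, j) :=
    fun i j z => rfl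
  have hcT : ∀ p q : Fin 2 × Fin 2, T.repr (T p) q = if p = q then 1 else 0 := by
    intro p q
    rw [Module.Basis.repr_self, Finsupp.single_apply]
  -- the projection map
  set π : (Asq ⊗[ℤ] Asq) →ₗ[ℤ] ℤ × ℤ :=
    (T.coord (0, 0)).prod (T.coord (0, 1) - T.coord (1, 0)) with hπ
  have hπ1 : π ((1 : Asq) ⊗ₜ[ℤ] xSq + xSq ⊗ₜ[ℤ] (1 : Asq)) = 0 := by
    rw [hv1]
    simp only [hπ, LinearMap.prod_apply, LinearMap.sub_apply, Pi.prod, map_add, hcoord, hcT]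
    norm_num [Prod.ext_iff]
  have hπ3 : π (xSq ⊗ₜ[ℤ] xSq) = 0 := by
    rw [hv3]
    simp only [hπ, LinearMap.prod_apply, LinearMap.sub_apply, Pi.prod, hcoord, hcT]
    norm_num [Prod.ext_iff]
  have hsurj : Function.Surjective π := by
    rintro ⟨u, v⟩
    refine ⟨u • T (0, 0) + v • T (0, 1), ?_⟩
    simp only [hπ, LinearMap.prod_apply, LinearMap.sub_apply, Pi.prod, map_add, map_smul,
      hcoord, hcT]
    norm_num [Prod.ext_iff]
  -- every element of Asq is a combination of b 0, b 1
  have hA : ∀ a : Asq, a = b.repr a 0 • b 0 + b.repr a 1 • b 1 := by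
    intro a
    have := b.sum_repr a
    rw [Fin.sum_univ_two] at this
    exact this.symm
  have hΔgen : ∀ a : Asq,
      Δ a = b.repr a 0 • (T (0, 1) + T (1, 0)) + b.repr a 1 • T (1, 1) := by
    intro a
    conv_lhs => rw [hA a]
    rw [map_add, map_smul, map_smul, hb0, hb1, hΔ1, hΔx, hv1, hv3]
  -- kernel of π is range of Δ
  have hker : LinearMap.range Δ = LinearMap.ker π := by
    apply le_antisymm
    · rintro _ ⟨a, rfl⟩
      rw [LinearMap.mem_ker, hΔgen, map_add, map_smul, map_smul]
      simp only [hπ, LinearMap.prod_apply, LinearMap.sub_apply, Pi.prod, map_add, hcoord, hcT]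
      norm_num [Prod.ext_iff]
    · intro z hz
      rw [LinearMap.mem_ker, hπ, LinearMap.prod_apply, Function.prod, Prod.mk_eq_zero,
        LinearMap.sub_apply, sub_eq_zero, hcoord, hcoord, hcoord] at hz
      obtain ⟨h00, h0110⟩ := hz
      have hz4 : z = T.repr z (0,0) • T (0,0) + T.repr z (0,1) • T (0,1)
          + T.repr z (1,0) • T (1,0) + T.repr z (1,1) • T (1,1) := by
        have := T.sum_repr z
        rw [Fintype.sum_prod_type, Fin.sum_univ_two, Fin.sum_univ_two, Fin.sum_univ_two] at this
        conv_lhs => rw [← this]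
        abel
      refine ⟨T.repr z (0,1) • (1 : Asq) + T.repr z (1,1) • xSq, ?_⟩
      rw [map_add, map_smul, map_smul, hΔ1, hΔx, hv1, hv3]
      conv_rhs => rw [hz4]
      rw [h00, ← h0110]
      simp only [smul_add, zero_smul, zero_add]
  -- injectivity
  have hinj : Function.Injective Δ := by
    rw [← LinearMap.ker_eq_bot]
    rw [Submodule.eq_bot_iff]
    intro a ha
    rw [LinearMap.mem_ker, hΔgen] at ha
    have h01 := congrArg (T.coord (0, 1)) ha
    have h11 := congrArg (T.coord (1, 1)) ha
    simp only [map_add, map_smul, hcoord, hcT, map_zero, Module.Basis.repr_self, Finsupp.single_apply] at h01 h11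
    norm_num [Prod.ext_iff] at h01 h11
    rw [hA a, h01, h11, zero_smul, zero_smul, add_zero]
  refine ⟨hinj, ?_, ?_⟩
  · have e : ((Asq ⊗[ℤ] Asq) ⧸ LinearMap.range Δ) ≃ₗ[ℤ] ℤ × ℤ :=
      (Submodule.quotEquivOfEq _ _ hker).trans (π.quotKerEquivOfSurjective hsurj)
    exact Module.Free.of_equiv e.symm
  · have e : ((Asq ⊗[ℤ] Asq) ⧸ LinearMap.range Δ) ≃ₗ[ℤ] ℤ × ℤ :=
      (Submodule.quotEquivOfEq _ _ hker).trans (π.quotKerEquivOfSurjective hsurj)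
    rw [e.finrank_eq]
    simp
end
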